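/- Let Δ > 0, let m, L be positive integers, and let w ∈ ℂ^m satisfy w_j ≠ 0 and Re(w_j) ≤ 0 for all j. Let x be a square-integrable random vector in ℝ^L, and let c ∈ ℂ^m be a random vector independent of x whose m real parts and m imaginary parts are 2m mutually independent centered Gaussian random variables of variance 1/2 (so E|c_j|² = 1 for each j). Define the ZOH-discretized SSM output y_L = ∑_{k=0}^{L−1} Re( ∑_{j=1}^m ((e^{Δ w_j} − 1)/w_j) · c_j · e^{Δ w_j (L−1−k)} ) · x_k. Then E[y_L²] ≤ Δ² · m² · L · λ_max(E[x xᵀ]), where λ_max denotes the largest eigenvalue. -/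

import Mathlib

open MeasureTheory ProbabilityTheory Matrix Real Filter
open scoped NNReal ENNReal

/-- The ZOH-discretized diagonal SSM output
`y_L = ∑_{k=0}^{L-1} Re(∑_{j=1}^m ((e^{Δ w_j} - 1)/w_j) c_j e^{Δ w_j (L-1-k)}) x_k`. -/
noncomputable def ssmOutput {m L : ℕ} (Δ : ℝ) (w : Fin m → ℂ) (c : Fin m → ℂ)
    (x : Fin L → ℝ) : ℝ :=
  ∑ k : Fin L,
    (∑ j : Fin m, ((Complex.exp ((Δ : ℂ) * w j) - 1) / w j) * c j *
      Complex.exp ((Δ : ℂ) * w j * ((L - 1 - (k : ℕ) : ℕ) : ℂ))).re * x k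


lemma abs_exp_sub_one_le_of_re_nonpos {z : ℂ} (hz : z.re ≤ 0) :
    ‖Complex.exp z - 1‖ ≤ ‖z‖ := by
  have hd : ∀ t ∈ Set.uIcc (0:ℝ) 1, HasDerivAt (fun t : ℝ => Complex.exp (t • z))
      (z * Complex.exp (t • z)) t := by
    intro t _
    have h1 : HasDerivAt (fun t : ℝ => (t : ℂ) * z) z t := by
      simpa using (Complex.ofRealCLM.hasDerivAt.mul_const z)
    have h2 := (Complex.hasDerivAt_exp ((t:ℂ)*z)).comp t h1
    have h3 : (fun t : ℝ => Complex.exp ((t:ℂ) * z)) = fun t : ℝ => Complex.exp (t • z) := by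
      funext s; simp [smul_eq_mul]
    rw [← h3]
    simpa [Function.comp_def, smul_eq_mul, mul_comm] using h2
  have hint : ∀ t ∈ Set.uIcc (0:ℝ) 1, ‖z * Complex.exp (t • z)‖ ≤ ‖z‖ := by
    intro t ht
    rw [Set.uIcc_of_le (by norm_num : (0:ℝ) ≤ 1)] at ht
    have : ‖Complex.exp (t • z)‖ ≤ 1 := by
      rw [Complex.norm_exp]
      have : (t • z).re ≤ 0 := by
        simp only [Complex.smul_re, smul_eq_mul]
        exact mul_nonpos_of_nonneg_of_nonpos ht.1 hz
      exact Real.exp_le_one_iff.mpr this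
    calc ‖z * Complex.exp (t • z)‖ = ‖z‖ * ‖Complex.exp (t • z)‖ := norm_mul _ _
      _ ≤ ‖z‖ * 1 := by gcongr
      _ = ‖z‖ := by simp
  have hFTC : ∫ t in (0:ℝ)..1, z * Complex.exp (t • z)
      = Complex.exp ((1:ℝ) • z) - Complex.exp ((0:ℝ) • z) := by
    apply intervalIntegral.integral_eq_sub_of_hasDerivAt (fun t ht => hd t ht)
    apply Continuous.intervalIntegrable
    continuity
  have hnorm := intervalIntegral.norm_integral_le_of_norm_le_const
    (C := ‖z‖) (f := fun t => z * Complex.exp (t • z)) (a := 0) (b := 1) ?_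
  · rw [hFTC] at hnorm
    simpa using hnorm
  · intro t ht
    rw [Set.uIoc_of_le (by norm_num : (0:ℝ) ≤ 1)] at ht
    exact hint t (by rw [Set.uIcc_of_le (by norm_num : (0:ℝ) ≤ 1)]; exact ⟨ht.1.le, ht.2⟩)

lemma coef_bound {Δ : ℝ} (hΔ : 0 < Δ) {wj : ℂ} (hw0 : wj ≠ 0) (hwre : wj.re ≤ 0) (n : ℕ) :
    ‖((Complex.exp ((Δ : ℂ) * wj) - 1) / wj) *
      Complex.exp ((Δ : ℂ) * wj * (n : ℂ))‖ ≤ Δ := by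
  have h1 : ‖Complex.exp ((Δ : ℂ) * wj) - 1‖ ≤ Δ * ‖wj‖ := by
    have := abs_exp_sub_one_le_of_re_nonpos (z := (Δ : ℂ) * wj)
      (by simp [Complex.mul_re]; nlinarith [hΔ.le, hwre])
    simpa [_root_.map_mul, Complex.norm_real, Real.norm_eq_abs, abs_of_pos hΔ] using this
  have h2 : ‖Complex.exp ((Δ : ℂ) * wj * (n : ℂ))‖ ≤ 1 := by
    rw [Complex.norm_exp]
    apply Real.exp_le_one_iff.mpr
    have : ((Δ : ℂ) * wj * (n : ℂ)).re = Δ * wj.re * n := by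
      simp [Complex.mul_re, Complex.mul_im]
    rw [this]
    have : Δ * wj.re ≤ 0 := mul_nonpos_of_nonneg_of_nonpos hΔ.le hwre
    exact mul_nonpos_of_nonpos_of_nonneg this (Nat.cast_nonneg n)
  calc ‖_‖ = ‖Complex.exp ((Δ : ℂ) * wj) - 1‖ / ‖wj‖ *
        ‖Complex.exp ((Δ : ℂ) * wj * (n : ℂ))‖ := by
        rw [norm_mul, norm_div]
    _ ≤ (Δ * ‖wj‖) / ‖wj‖ * 1 := by
        apply mul_le_mul _ h2 (norm_nonneg _) (by positivity)
        gcongr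
    _ = Δ := by
        rw [mul_one, mul_div_assoc, div_self (by simpa using hw0), mul_one]

lemma integrable_sq_exp_neg_mul_sq {b : ℝ} (hb : 0 < b) :
    Integrable (fun x : ℝ => x ^ 2 * Real.exp (-b * x ^ 2)) := by
  have := integrable_rpow_mul_exp_neg_mul_sq hb (s := 2) (by norm_num)
  have heq : (fun x : ℝ => x ^ (2:ℝ) * Real.exp (-b * x ^ 2))
      = fun x : ℝ => x ^ 2 * Real.exp (-b * x ^ 2) := by
    funext x; rw [show (2:ℝ) = ((2:ℕ):ℝ) by norm_num, Real.rpow_natCast]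
  rwa [heq] at this

lemma tendsto_mul_exp_neg_mul_sq_atTop {b : ℝ} (hb : 0 < b) :
    Tendsto (fun x : ℝ => x * Real.exp (-b * x ^ 2)) atTop (nhds 0) := by
  have h := rpow_mul_exp_neg_mul_sq_isLittleO_exp_neg hb 1
  have h2 : Tendsto (fun x : ℝ => Real.exp (-(1/2) * x)) atTop (nhds 0) := by
    simpa using Real.tendsto_exp_comp_nhds_zero.mpr
      (by simpa using (tendsto_const_nhds.neg_mul_atTop (by norm_num : (-(1/2):ℝ) < 0)
        tendsto_id) : Tendsto (fun x : ℝ => -(1/2) * x) atTop atBot)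
  have h3 := h.isBigO.trans_tendsto h2
  have : (fun x : ℝ => x ^ (1:ℝ) * Real.exp (-b * x ^ 2)) =ᶠ[atTop]
      fun x : ℝ => x * Real.exp (-b * x ^ 2) := by
    filter_upwards [eventually_ge_atTop (0:ℝ)] with x hx
    rw [Real.rpow_one]
  exact Tendsto.congr' this h3

lemma integral_sq_exp_neg_mul_sq {b : ℝ} (hb : 0 < b) :
    ∫ x : ℝ, x ^ 2 * Real.exp (-b * x ^ 2) = Real.sqrt (π / b) / (2 * b) := by
  set f : ℝ → ℝ := fun x => x * Real.exp (-b * x ^ 2) with hf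
  set g : ℝ → ℝ := fun x => Real.exp (-b * x ^ 2) - 2 * b * (x ^ 2 * Real.exp (-b * x ^ 2))
    with hg
  have hderiv : ∀ x : ℝ, HasDerivAt f (g x) x := by
    intro x
    have h1 : HasDerivAt (fun x : ℝ => -b * x ^ 2) (-b * (2 * x)) x := by
      simpa using ((hasDerivAt_pow 2 x).const_mul (-b))
    have h2 : HasDerivAt (fun x : ℝ => Real.exp (-b * x ^ 2))
        (Real.exp (-b * x ^ 2) * (-b * (2 * x))) x := (Real.hasDerivAt_exp _).comp x h1
    have h3 : HasDerivAt (fun y : ℝ => y * Real.exp (-b * y ^ 2))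
        (1 * Real.exp (-b * x ^ 2) + x * (Real.exp (-b * x ^ 2) * (-b * (2 * x)))) x :=
      (hasDerivAt_id' x).mul h2
    convert h3 using 1
    simp only [hg, id_eq, one_mul]
    ring
  have hint_exp : Integrable (fun x : ℝ => Real.exp (-b * x ^ 2)) :=
    integrable_exp_neg_mul_sq hb
  have hint_sq := integrable_sq_exp_neg_mul_sq hb
  have hint_g : Integrable g := hint_exp.sub (hint_sq.const_mul (2 * b))
  have htop : Tendsto f atTop (nhds 0) := tendsto_mul_exp_neg_mul_sq_atTop hb
  have hbot : Tendsto f atBot (nhds 0) := by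
    have : Tendsto (fun x : ℝ => f (-x)) atTop (nhds 0) := by
      have : (fun x : ℝ => f (-x)) = fun x : ℝ => -(f x) := by
        funext x; simp only [hf]; ring_nf
      rw [this]
      simpa using htop.neg
    have hcomp := this.comp tendsto_neg_atBot_atTop
    have : ((fun x : ℝ => f (-x)) ∘ Neg.neg) = f := by funext x; simp
    rwa [this] at hcomp
  have hIoi : ∫ x in Set.Ioi (0:ℝ), g x = 0 - f 0 :=
    integral_Ioi_of_hasDerivAt_of_tendsto' (fun x _ => hderiv x)
      (hint_g.integrableOn) htop
  have hIic : ∫ x in Set.Iic (0:ℝ), g x = f 0 - 0 :=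
    integral_Iic_of_hasDerivAt_of_tendsto' (fun x _ => hderiv x)
      (hint_g.integrableOn) hbot
  have hsplit : ∫ x : ℝ, g x = (∫ x in Set.Iic (0:ℝ), g x) + ∫ x in Set.Ioi (0:ℝ), g x := by
    rw [← setIntegral_union (Set.Iic_disjoint_Ioi le_rfl) measurableSet_Ioi
      hint_g.integrableOn hint_g.integrableOn, Set.Iic_union_Ioi,
      setIntegral_univ]
  have hzero : ∫ x : ℝ, g x = 0 := by
    rw [hsplit, hIoi, hIic]; simp [hf]
  have hsub : ∫ x : ℝ, g x = (∫ x : ℝ, Real.exp (-b * x ^ 2))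
      - 2 * b * ∫ x : ℝ, x ^ 2 * Real.exp (-b * x ^ 2) := by
    rw [hg, integral_sub hint_exp (hint_sq.const_mul _), MeasureTheory.integral_const_mul]
  rw [hzero, integral_gaussian] at hsub
  have h2b : (2 * b) ≠ 0 := by positivity
  field_simp at hsub ⊢
  linarith

lemma gaussianReal_eq_withDensity_nnreal {v : ℝ≥0} (hv : v ≠ 0) :
    gaussianReal 0 v
      = volume.withDensity (fun x => ((gaussianPDFReal 0 v x).toNNReal : ℝ≥0∞)) := by
  rw [gaussianReal_of_var_ne_zero _ hv]
  rfl

lemma meas_toNNReal_pdf (v : ℝ≥0) :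
    Measurable (fun x => (gaussianPDFReal 0 v x).toNNReal) :=
  (measurable_gaussianPDFReal 0 v).real_toNNReal

lemma pdf_smul_eq {v : ℝ≥0} (g : ℝ → ℝ) :
    (fun x => (gaussianPDFReal 0 v x).toNNReal • g x)
      = fun x => gaussianPDFReal 0 v x * g x := by
  funext x
  rw [NNReal.smul_def, smul_eq_mul, Real.coe_toNNReal _ (gaussianPDFReal_nonneg 0 v x)]

lemma integrable_sq_gaussianReal (v : ℝ≥0) :
    Integrable (fun x : ℝ => x ^ 2) (gaussianReal 0 v) := by
  by_cases hv : v = 0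
  · rw [hv, gaussianReal_zero_var]
    refine ⟨(measurable_id.pow_const 2).aestronglyMeasurable, ?_⟩
    rw [HasFiniteIntegral, lintegral_dirac' _ (by fun_prop)]
    exact ENNReal.coe_lt_top
  rw [gaussianReal_eq_withDensity_nnreal hv,
    integrable_withDensity_iff_integrable_smul (meas_toNNReal_pdf v), pdf_smul_eq]
  have hb : 0 < (2 * (v:ℝ))⁻¹ := by
    have : 0 < (v:ℝ) := lt_of_le_of_ne (v.coe_nonneg) (by exact_mod_cast Ne.symm hv)
    positivity
  have := (integrable_sq_exp_neg_mul_sq hb).const_mul (√(2 * π * v))⁻¹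
  apply this.congr
  apply Eventually.of_forall
  intro x
  simp only [gaussianPDFReal]
  ring_nf

lemma integral_sq_gaussianReal (v : ℝ≥0) :
    ∫ x : ℝ, x ^ 2 ∂(gaussianReal 0 v) = v := by
  by_cases hv : v = 0
  · rw [hv, gaussianReal_zero_var, integral_dirac]
    simp
  have hvpos : 0 < (v:ℝ) := lt_of_le_of_ne (v.coe_nonneg) (by exact_mod_cast Ne.symm hv)
  have hb : 0 < (2 * (v:ℝ))⁻¹ := by positivity
  rw [gaussianReal_eq_withDensity_nnreal hv,
    integral_withDensity_eq_integral_smul (meas_toNNReal_pdf v), pdf_smul_eq]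
  have heq : (fun x : ℝ => gaussianPDFReal 0 v x * x ^ 2)
      = fun x : ℝ => (√(2 * π * v))⁻¹ * (x ^ 2 * Real.exp (-(2 * (v:ℝ))⁻¹ * x ^ 2)) := by
    funext x
    simp only [gaussianPDFReal]
    ring_nf
  rw [heq, MeasureTheory.integral_const_mul, integral_sq_exp_neg_mul_sq hb]
  have h1 : π / (2 * (v:ℝ))⁻¹ = 2 * π * v := by field_simp
  have h2 : (2 : ℝ) * (2 * (v:ℝ))⁻¹ = (v:ℝ)⁻¹ := by field_simp
  rw [h1, h2]
  have h3 : (0:ℝ) < √(2 * π * v) := Real.sqrt_pos.mpr (by positivity)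
  field_simp

lemma spectral_bound {L : ℕ} (hL : 0 < L) (M B : Matrix (Fin L) (Fin L) ℝ)
    (hM : M.IsHermitian)
    (hB : ∀ v : Fin L → ℝ, 0 ≤ ∑ i, ∑ k, v i * B i k * v k)
    (hMdiag : 0 ≤ ∑ i, M i i) {t : ℝ}
    (hBtr : ∑ i, B i i ≤ t) :
    ∑ i, ∑ k, B i k * M i k ≤ (⨆ n, hM.eigenvalues n) * t := by
  set U : Matrix (Fin L) (Fin L) ℝ := (hM.eigenvectorUnitary : Matrix (Fin L) (Fin L) ℝ)
    with hU_def
  set lam : Fin L → ℝ := hM.eigenvalues with hlam_def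
  have hmem := hM.eigenvectorUnitary.2
  rw [Unitary.mem_iff] at hmem
  have hUU : U * star U = 1 := hmem.2
  have hUU' : star U * U = 1 := hmem.1
  have hMentry : ∀ i k, M i k = ∑ n, lam n * (U i n * U k n) := by
    intro i k
    conv_lhs => rw [hM.spectral_theorem, Unitary.conjStarAlgAut_apply]
    rw [Matrix.mul_apply]
    congr 1
    funext n
    rw [Matrix.mul_apply, Finset.sum_eq_single n]
    · simp [Matrix.diagonal_apply, star, hU_def, Matrix.IsHermitian.eigenvectorUnitary_apply]
      ring
    · intro b _ hb
      simp [Matrix.diagonal_apply, hb]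
    · simp
  have hrow : ∀ i k, ∑ n, U i n * U k n = if i = k then (1:ℝ) else 0 := by
    intro i k
    have := congrFun (congrFun hUU i) k
    rw [Matrix.mul_apply] at this
    simp only [star, Matrix.conjTranspose_apply, star_trivial, id_eq] at this
    rw [this]
    simp [Matrix.one_apply]
  have hcol : ∀ n, ∑ i, U i n * U i n = 1 := by
    intro n
    have := congrFun (congrFun hUU' n) n
    rw [Matrix.mul_apply] at this
    simp only [star, Matrix.conjTranspose_apply, star_trivial, id_eq] at this
    rw [this]
    simp [Matrix.one_apply]
  set q : Fin L → ℝ := fun n => ∑ i, ∑ k, U i n * B i k * U k n with hq_def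
  have hq_nonneg : ∀ n, 0 ≤ q n := fun n => hB _
  have hS : ∑ i, ∑ k, B i k * M i k = ∑ n, lam n * q n := by
    have h1 : ∀ i k : Fin L, B i k * M i k = ∑ n, lam n * (U i n * B i k * U k n) := by
      intro i k; rw [hMentry, Finset.mul_sum]; congr 1; funext n; ring
    calc ∑ i, ∑ k, B i k * M i k
        = ∑ i, ∑ k, ∑ n, lam n * (U i n * B i k * U k n) := by
          exact Finset.sum_congr rfl fun i _ => Finset.sum_congr rfl fun k _ => h1 i k
      _ = ∑ i : Fin L, ∑ n, ∑ k, lam n * (U i n * B i k * U k n) := by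
          exact Finset.sum_congr rfl fun i _ => Finset.sum_comm
      _ = ∑ n, ∑ i, ∑ k, lam n * (U i n * B i k * U k n) := Finset.sum_comm
      _ = ∑ n, lam n * q n := by
          refine Finset.sum_congr rfl fun n _ => ?_
          rw [hq_def]
          simp_rw [← Finset.mul_sum]
  have hqsum : ∑ n, q n = ∑ i, B i i := by
    have h2 : ∀ i n : Fin L, ∑ k, U i n * B i k * U k n
        = ∑ k, B i k * (U i n * U k n) := by
      intro i n; exact Finset.sum_congr rfl fun k _ => by ring
    calc ∑ n, q n = ∑ n : Fin L, ∑ i, ∑ k, U i n * B i k * U k n := rfl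
      _ = ∑ i : Fin L, ∑ n, ∑ k, U i n * B i k * U k n := Finset.sum_comm
      _ = ∑ i : Fin L, ∑ n, ∑ k, B i k * (U i n * U k n) := by
          exact Finset.sum_congr rfl fun i _ => Finset.sum_congr rfl fun n _ => h2 i n
      _ = ∑ i : Fin L, ∑ k, ∑ n, B i k * (U i n * U k n) := by
          exact Finset.sum_congr rfl fun i _ => Finset.sum_comm
      _ = ∑ i : Fin L, ∑ k, B i k * (if i = k then (1:ℝ) else 0) := by
          refine Finset.sum_congr rfl fun i _ => Finset.sum_congr rfl fun k _ => ?_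
          rw [← Finset.mul_sum, hrow]
      _ = ∑ i, B i i := by
          refine Finset.sum_congr rfl fun i _ => ?_
          simp [mul_ite]
  have hne : Nonempty (Fin L) := ⟨⟨0, hL⟩⟩
  set lmax : ℝ := ⨆ n, lam n with hlmax_def
  have hbdd : BddAbove (Set.range lam) := Set.Finite.bddAbove (Set.finite_range lam)
  have hle : ∀ n, lam n ≤ lmax := fun n => le_ciSup hbdd n
  have hlmax_nonneg : 0 ≤ lmax := by
    have htr : ∑ n, lam n = ∑ i, M i i := by
      calc ∑ n, lam n = ∑ n : Fin L, lam n * ∑ i, U i n * U i n := by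
            refine Finset.sum_congr rfl fun n _ => ?_
            rw [hcol n, mul_one]
        _ = ∑ n : Fin L, ∑ i, lam n * (U i n * U i n) := by
            exact Finset.sum_congr rfl fun n _ => by rw [Finset.mul_sum]
        _ = ∑ i : Fin L, ∑ n, lam n * (U i n * U i n) := Finset.sum_comm
        _ = ∑ i, M i i := by
            exact Finset.sum_congr rfl fun i _ => (hMentry i i).symm
    by_contra h
    push_neg at h
    have hall : ∀ n, lam n < 0 := fun n => lt_of_le_of_lt (hle n) h
    have : ∑ n, lam n < 0 := by
      have := Finset.sum_lt_sum_of_nonempty (Finset.univ_nonempty (α := Fin L))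
        (fun n _ => hall n)
      simpa using this
    rw [htr] at this
    linarith
  calc ∑ i, ∑ k, B i k * M i k = ∑ n, lam n * q n := hS
    _ ≤ ∑ n, lmax * q n := by
        apply Finset.sum_le_sum
        intro n _
        exact mul_le_mul_of_nonneg_right (hle n) (hq_nonneg n)
    _ = lmax * ∑ i, B i i := by rw [← Finset.mul_sum, hqsum]
    _ ≤ lmax * t := mul_le_mul_of_nonneg_left hBtr hlmax_nonneg

lemma sq_moment_of_map_gauss {Ω : Type} [MeasurableSpace Ω] {μ : Measure Ω} {r : Ω → ℝ}
    (hr : Measurable r) {v : ℝ≥0}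
    (h : Measure.map r μ = gaussianReal 0 v) :
    Integrable (fun ω => (r ω) ^ 2) μ ∧ ∫ ω, (r ω) ^ 2 ∂μ = (v : ℝ) := by
  have h1 : Integrable (fun t : ℝ => t ^ 2) (Measure.map r μ) := by
    rw [h]; exact integrable_sq_gaussianReal v
  constructor
  · have := (integrable_map_measure h1.1 hr.aemeasurable).mp h1
    simpa [Function.comp_def] using this
  · have h2 := integral_map hr.aemeasurable h1.1
    rw [h] at h2
    rw [← h2, integral_sq_gaussianReal]

/-- For the ZOH-discretized SSM with timescale `Δ > 0`, state vector `w`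
with nonzero entries and nonpositive real parts, a square-integrable random input
`x ∈ ℝ^L`, and an independent random read-out `c ∈ ℂ^m` whose `2m` real and imaginary parts
are mutually independent centered Gaussians of variance `1/2`, the output satisfies
`E[y_L²] ≤ Δ² m² L λ_max(E[x xᵀ])`. -/
theorem stmt_3
    {Ω : Type} [MeasurableSpace Ω] (μ : Measure Ω) [IsProbabilityMeasure μ]
    (Δ : ℝ) (hΔ : 0 < Δ) (m L : ℕ) (hm : 0 < m) (hL : 0 < L)
    (w : Fin m → ℂ) (hw0 : ∀ j, w j ≠ 0) (hwre : ∀ j, (w j).re ≤ 0)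
    (x : Ω → Fin L → ℝ) (hxmeas : Measurable x)
    (hxL2 : ∀ i, MemLp (fun ω => x ω i) 2 μ)
    (c : Ω → Fin m → ℂ) (hcmeas : Measurable c)
    (hcindep : iIndepFun
      (fun (i : Fin m ⊕ Fin m) (ω : Ω) =>
        Sum.elim (fun j => (c ω j).re) (fun j => (c ω j).im) i) μ)
    (hcgauss : ∀ i : Fin m ⊕ Fin m,
      Measure.map (fun ω => Sum.elim (fun j => (c ω j).re) (fun j => (c ω j).im) i) μ
        = gaussianReal 0 (1 / 2 : NNReal))
    (hindep : IndepFun c x μ)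
    (hHerm : (Matrix.of fun i k : Fin L => ∫ ω, x ω i * x ω k ∂μ).IsHermitian) :
    ∫ ω, (ssmOutput Δ w (c ω) (x ω)) ^ 2 ∂μ
      ≤ Δ ^ 2 * (m : ℝ) ^ 2 * (L : ℝ) * ⨆ i, hHerm.eigenvalues i := by
  classical
  -- the deterministic coefficient function
  set g : (Fin m → ℂ) → Fin L → ℝ := fun cv k =>
    (∑ j : Fin m, ((Complex.exp ((Δ : ℂ) * w j) - 1) / w j) * cv j *
      Complex.exp ((Δ : ℂ) * w j * ((L - 1 - (k : ℕ) : ℕ) : ℂ))).re with hg_def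
  have hssm : ∀ cv xv, ssmOutput Δ w cv xv = ∑ k : Fin L, g cv k * xv k := fun _ _ => rfl
  -- bound on coefficients
  have hterm : ∀ (cv : Fin m → ℂ) (j : Fin m) (k : Fin L),
      ‖((Complex.exp ((Δ : ℂ) * w j) - 1) / w j) * cv j *
        Complex.exp ((Δ : ℂ) * w j * ((L - 1 - (k : ℕ) : ℕ) : ℂ))‖
        ≤ Δ * ‖cv j‖ := by
    intro cv j k
    have h1 := coef_bound hΔ (hw0 j) (hwre j) (L - 1 - (k : ℕ))
    calc ‖_‖
        = ‖((Complex.exp ((Δ : ℂ) * w j) - 1) / w j) *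
            Complex.exp ((Δ : ℂ) * w j * ((L - 1 - (k : ℕ) : ℕ) : ℂ))‖
          * ‖cv j‖ := by
          rw [← norm_mul]; congr 1; ring
      _ ≤ Δ * ‖cv j‖ :=
          mul_le_mul_of_nonneg_right h1 (norm_nonneg _)
  have hgb : ∀ (cv : Fin m → ℂ) (k : Fin L),
      |g cv k| ≤ Δ * ∑ j, ‖cv j‖ := by
    intro cv k
    rw [hg_def]
    refine le_trans (Complex.abs_re_le_norm _) ?_
    refine le_trans (norm_sum_le _ _) ?_
    rw [Finset.mul_sum]
    exact Finset.sum_le_sum fun j _ => hterm cv j k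
  have hgsq : ∀ (cv : Fin m → ℂ) (k : Fin L),
      (g cv k) ^ 2 ≤ Δ ^ 2 * m * ∑ j, ‖cv j‖ ^ 2 := by
    intro cv k
    have h1 : (g cv k) ^ 2 ≤ (Δ * ∑ j, ‖cv j‖) ^ 2 := by
      rw [← sq_abs]
      apply pow_le_pow_left₀ (abs_nonneg _) (hgb cv k)
    have h2 : (∑ j, ‖cv j‖) ^ 2 ≤ m * ∑ j, ‖cv j‖ ^ 2 := by
      have := _root_.sq_sum_le_card_mul_sum_sq (s := (Finset.univ : Finset (Fin m)))
        (f := fun j => ‖cv j‖)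
      simpa using this
    calc (g cv k) ^ 2 ≤ (Δ * ∑ j, ‖cv j‖) ^ 2 := h1
      _ = Δ ^ 2 * (∑ j, ‖cv j‖) ^ 2 := by ring
      _ ≤ Δ ^ 2 * (m * ∑ j, ‖cv j‖ ^ 2) :=
          mul_le_mul_of_nonneg_left h2 (by positivity)
      _ = Δ ^ 2 * m * ∑ j, ‖cv j‖ ^ 2 := by ring
  -- measurability
  have hgmeas : ∀ k : Fin L, Measurable (fun cv : Fin m → ℂ => g cv k) := by
    intro k
    rw [hg_def]
    apply Complex.measurable_re.comp
    apply Finset.measurable_sum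
    intro j _
    exact ((measurable_pi_apply j).const_mul _).mul_const _
  -- gaussian moments
  have hre : ∀ j : Fin m, Integrable (fun ω => (c ω j).re ^ 2) μ ∧
      ∫ ω, (c ω j).re ^ 2 ∂μ = ((1/2 : ℝ≥0) : ℝ) := fun j =>
    sq_moment_of_map_gauss
      (Complex.measurable_re.comp ((measurable_pi_apply j).comp hcmeas)) (hcgauss (Sum.inl j))
  have him : ∀ j : Fin m, Integrable (fun ω => (c ω j).im ^ 2) μ ∧
      ∫ ω, (c ω j).im ^ 2 ∂μ = ((1/2 : ℝ≥0) : ℝ) := fun j =>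
    sq_moment_of_map_gauss
      (Complex.measurable_im.comp ((measurable_pi_apply j).comp hcmeas)) (hcgauss (Sum.inr j))
  have habs_eq : ∀ (j : Fin m) (ω : Ω),
      ‖c ω j‖ ^ 2 = (c ω j).re ^ 2 + (c ω j).im ^ 2 := by
    intro j ω
    rw [Complex.sq_norm, Complex.normSq_apply]; ring
  have habs_int : ∀ j, Integrable (fun ω => ‖c ω j‖ ^ 2) μ := by
    intro j
    apply ((hre j).1.add (him j).1).congr
    exact Filter.Eventually.of_forall fun ω => (habs_eq j ω).symm
  have habs_val : ∀ j, ∫ ω, ‖c ω j‖ ^ 2 ∂μ = 1 := by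
    intro j
    rw [integral_congr_ae (Filter.Eventually.of_forall fun ω => habs_eq j ω),
      integral_add (hre j).1 (him j).1, (hre j).2, (him j).2]
    norm_num
  set D : Ω → ℝ := fun ω => Δ ^ 2 * m * ∑ j, ‖c ω j‖ ^ 2 with hD_def
  have hDint : Integrable D μ :=
    (integrable_finset_sum _ fun j _ => habs_int j).const_mul _
  have hDval : ∫ ω, D ω ∂μ = Δ ^ 2 * m ^ 2 := by
    rw [hD_def]
    rw [MeasureTheory.integral_const_mul, integral_finset_sum _ (fun j _ => habs_int j)]
    simp only [habs_val, Finset.sum_const, Finset.card_univ, Fintype.card_fin, smul_eq_mul,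
      mul_one]
    ring
  -- integrability of products
  have hGG_bound : ∀ (k l : Fin L) (ω : Ω), |g (c ω) k * g (c ω) l| ≤ D ω := by
    intro k l ω
    have h1 := hgsq (c ω) k
    have h2 := hgsq (c ω) l
    show |g (c ω) k * g (c ω) l| ≤ Δ ^ 2 * m * ∑ j, ‖c ω j‖ ^ 2
    rw [abs_mul]
    nlinarith [sq_nonneg (|g (c ω) k| - |g (c ω) l|), sq_abs (g (c ω) k), sq_abs (g (c ω) l),
      abs_nonneg (g (c ω) k), abs_nonneg (g (c ω) l)]
  have hGGmeas : ∀ k l : Fin L, Measurable (fun ω => g (c ω) k * g (c ω) l) :=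
    fun k l => ((hgmeas k).comp hcmeas).mul ((hgmeas l).comp hcmeas)
  have hGGint : ∀ k l : Fin L, Integrable (fun ω => g (c ω) k * g (c ω) l) μ := by
    intro k l
    apply hDint.mono' (hGGmeas k l).aestronglyMeasurable
    exact Filter.Eventually.of_forall fun ω => by
      rw [Real.norm_eq_abs]; exact hGG_bound k l ω
  have hxxint : ∀ k l : Fin L, Integrable (fun ω => x ω k * x ω l) μ := by
    intro k l
    have hbint : Integrable (fun ω => ((x ω k) ^ 2 + (x ω l) ^ 2) / 2) μ :=
      (((hxL2 k).integrable_sq).add ((hxL2 l).integrable_sq)).div_const 2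
    apply hbint.mono' (((measurable_pi_apply k).comp hxmeas).mul
      ((measurable_pi_apply l).comp hxmeas)).aestronglyMeasurable
    refine Filter.Eventually.of_forall fun ω => ?_
    show ‖x ω k * x ω l‖ ≤ (x ω k ^ 2 + x ω l ^ 2) / 2
    rw [Real.norm_eq_abs, abs_mul]
    nlinarith [sq_nonneg (|x ω k| - |x ω l|), sq_abs (x ω k), sq_abs (x ω l),
      abs_nonneg (x ω k), abs_nonneg (x ω l)]
  have hindepkl : ∀ k l : Fin L,
      IndepFun (fun ω => g (c ω) k * g (c ω) l) (fun ω => x ω k * x ω l) μ := by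
    intro k l
    exact hindep.comp ((hgmeas k).mul (hgmeas l))
      ((measurable_pi_apply k).mul (measurable_pi_apply l))
  have hprodint : ∀ k l : Fin L,
      Integrable (fun ω => (g (c ω) k * g (c ω) l) * (x ω k * x ω l)) μ :=
    fun k l => (hindepkl k l).integrable_mul (hGGint k l) (hxxint k l)
  have hsplit : ∀ k l : Fin L, ∫ ω, (g (c ω) k * g (c ω) l) * (x ω k * x ω l) ∂μ
      = (∫ ω, g (c ω) k * g (c ω) l ∂μ) * ∫ ω, x ω k * x ω l ∂μ :=
    fun k l => (hindepkl k l).integral_fun_mul_eq_mul_integral (hGGint k l).1 (hxxint k l).1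
  -- expansion of the square
  have hexp : ∀ ω, (ssmOutput Δ w (c ω) (x ω)) ^ 2
      = ∑ k : Fin L, ∑ l : Fin L, (g (c ω) k * g (c ω) l) * (x ω k * x ω l) := by
    intro ω
    rw [hssm, sq, Finset.sum_mul_sum]
    exact Finset.sum_congr rfl fun k _ => Finset.sum_congr rfl fun l _ => by ring
  have hLHS : ∫ ω, (ssmOutput Δ w (c ω) (x ω)) ^ 2 ∂μ
      = ∑ k : Fin L, ∑ l : Fin L,
          (∫ ω, g (c ω) k * g (c ω) l ∂μ) * ∫ ω, x ω k * x ω l ∂μ := by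
    rw [integral_congr_ae (Filter.Eventually.of_forall hexp),
      integral_finset_sum _ (fun k _ => integrable_finset_sum _ (fun l _ => hprodint k l))]
    exact Finset.sum_congr rfl fun k _ => by
      rw [integral_finset_sum _ (fun l _ => hprodint k l)]
      exact Finset.sum_congr rfl fun l _ => hsplit k l
  -- the two matrices
  set B : Matrix (Fin L) (Fin L) ℝ :=
    Matrix.of (fun k l => ∫ ω, g (c ω) k * g (c ω) l ∂μ) with hB_def
  have hBpsd : ∀ v : Fin L → ℝ, 0 ≤ ∑ i, ∑ k, v i * B i k * v k := by
    intro v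
    have hterm_int : ∀ i k : Fin L,
        Integrable (fun ω => v i * (g (c ω) i * g (c ω) k) * v k) μ := by
      intro i k
      have := ((hGGint i k).const_mul (v i)).mul_const (v k)
      apply this.congr
      exact Filter.Eventually.of_forall fun ω => rfl
    have hkey : ∑ i, ∑ k, v i * B i k * v k
        = ∫ ω, (∑ i, v i * g (c ω) i) ^ 2 ∂μ := by
      have h1 : ∀ ω, (∑ i, v i * g (c ω) i) ^ 2
          = ∑ i, ∑ k, v i * (g (c ω) i * g (c ω) k) * v k := by
        intro ω
        rw [sq, Finset.sum_mul_sum]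
        exact Finset.sum_congr rfl fun i _ => Finset.sum_congr rfl fun k _ => by ring
      rw [integral_congr_ae (Filter.Eventually.of_forall h1),
        integral_finset_sum _ (fun i _ => integrable_finset_sum _ (fun k _ => hterm_int i k))]
      refine Finset.sum_congr rfl fun i _ => ?_
      rw [integral_finset_sum _ (fun k _ => hterm_int i k)]
      refine Finset.sum_congr rfl fun k _ => ?_
      have : (fun ω => v i * (g (c ω) i * g (c ω) k) * v k)
          = fun ω => (v i * v k) * (g (c ω) i * g (c ω) k) := by
        funext ω; ring
      rw [this, MeasureTheory.integral_const_mul, hB_def]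
      simp only [Matrix.of_apply]
      ring
    rw [hkey]
    exact integral_nonneg fun ω => sq_nonneg _
  have hMdiag : 0 ≤ ∑ i, (Matrix.of fun i k : Fin L => ∫ ω, x ω i * x ω k ∂μ) i i := by
    apply Finset.sum_nonneg
    intro i _
    simp only [Matrix.of_apply]
    exact integral_nonneg fun ω => mul_self_nonneg _
  have hBtr : ∑ i, B i i ≤ Δ ^ 2 * (m : ℝ) ^ 2 * (L : ℝ) := by
    have h1 : ∀ k : Fin L, B k k ≤ Δ ^ 2 * m ^ 2 := by
      intro k
      have h2 : B k k = ∫ ω, g (c ω) k * g (c ω) k ∂μ := rfl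
      rw [h2, ← hDval]
      apply integral_mono (hGGint k k) hDint
      intro ω
      have h3 := hgsq (c ω) k
      show g (c ω) k * g (c ω) k ≤ D ω
      have hD : D ω = Δ ^ 2 * m * ∑ j, ‖c ω j‖ ^ 2 := rfl
      rw [hD, ← sq]
      exact h3
    calc ∑ i, B i i ≤ ∑ _i : Fin L, Δ ^ 2 * (m:ℝ) ^ 2 := Finset.sum_le_sum fun i _ => h1 i
      _ = Δ ^ 2 * (m : ℝ) ^ 2 * (L : ℝ) := by
          simp [Finset.sum_const, Finset.card_univ]
          ring
  have hfinal := spectral_bound hL (Matrix.of fun i k : Fin L => ∫ ω, x ω i * x ω k ∂μ) B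
    hHerm hBpsd hMdiag hBtr
  rw [hLHS]
  calc ∑ k : Fin L, ∑ l : Fin L,
        (∫ ω, g (c ω) k * g (c ω) l ∂μ) * ∫ ω, x ω k * x ω l ∂μ
      = ∑ i, ∑ k, B i k * (Matrix.of fun i k : Fin L => ∫ ω, x ω i * x ω k ∂μ) i k := rfl
    _ ≤ (⨆ n, hHerm.eigenvalues n) * (Δ ^ 2 * (m : ℝ) ^ 2 * (L : ℝ)) := hfinal
    _ = Δ ^ 2 * (m : ℝ) ^ 2 * (L : ℝ) * ⨆ i, hHerm.eigenvalues i := by ring
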